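/- A function g : ℝᵈ → ℝ ∪ {+∞} is convex if and only if it is the pointwise supremum of a family of affine extended functions. -/

import Mathlib

/-- A *linear extended function*: scaling and additivity whenever the sum is legal. -/
def IsLinExt {E : Type*} [AddCommGroup E] [Module ℝ E] (f : E → EReal) : Prop :=
  (∀ (α : ℝ) (x : E), f (α • x) = (α : EReal) * f x) ∧
  (∀ x x' : E, ¬ ((f x = ⊤ ∧ f x' = ⊥) ∨ (f x = ⊥ ∧ f x' = ⊤)) →
    f (x + x') = f x + f x')

/-- An *affine extended function*: a horizontally and vertically shifted linear extended fn. -/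
def IsAffExt {E : Type*} [AddCommGroup E] [Module ℝ E] (h : E → EReal) : Prop :=
  ∃ (f : E → EReal) (x₀ : E) (β : ℝ), IsLinExt f ∧ ∀ x, h x = f (x - x₀) + (β : EReal)

open Module

section Aux
variable {E F : Type*} [AddCommGroup E] [Module ℝ E] [AddCommGroup F] [Module ℝ F]

lemma IsLinExt.zero_apply {f : E → EReal} (hf : IsLinExt f) : f 0 = 0 := by
  have h := hf.1 0 0
  simpa using h

lemma IsLinExt.comp {f : E → EReal} (hf : IsLinExt f) (L : F →ₗ[ℝ] E) :
    IsLinExt (fun x => f (L x)) := by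
  refine ⟨fun α x => ?_, fun x x' h => ?_⟩
  · show f (L (α • x)) = _
    rw [map_smul]; exact hf.1 α (L x)
  · show f (L (x + x')) = _
    rw [map_add]; exact hf.2 (L x) (L x') h

lemma isLinExt_coe (ψ : E →ₗ[ℝ] ℝ) : IsLinExt (fun x => ((ψ x : ℝ) : EReal)) := by
  refine ⟨fun α x => ?_, fun x x' _ => ?_⟩
  · show ((ψ (α • x) : ℝ) : EReal) = _
    rw [map_smul, smul_eq_mul, EReal.coe_mul]
  · show ((ψ (x + x') : ℝ) : EReal) = _
    rw [map_add, EReal.coe_add]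

lemma isLinExt_patch (ψ : E →ₗ[ℝ] ℝ) {G : E → EReal} (hG : IsLinExt G) :
    IsLinExt (fun x => if ψ x < 0 then (⊤ : EReal) else if 0 < ψ x then ⊥ else G x) := by
  constructor
  · intro α x
    have hψ : ψ (α • x) = α * ψ x := by rw [map_smul, smul_eq_mul]
    rcases lt_trichotomy α 0 with hα | rfl | hα
    · rcases lt_trichotomy (ψ x) 0 with h | h | h
      · have h1 : ¬ ψ (α • x) < 0 := by rw [hψ]; nlinarith
        have h2 : 0 < ψ (α • x) := by rw [hψ]; nlinarith
        simp only [if_neg h1, if_pos h2, if_pos h, EReal.coe_mul_top_of_neg hα]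
      · have h1 : ¬ ψ (α • x) < 0 := by rw [hψ, h]; simp
        have h2 : ¬ 0 < ψ (α • x) := by rw [hψ, h]; simp
        simp only [if_neg h1, if_neg h2, if_neg (show ¬ ψ x < 0 by rw [h]; simp),
          if_neg (show ¬ (0:ℝ) < ψ x by rw [h]; simp)]
        exact hG.1 α x
      · have h1 : ψ (α • x) < 0 := by rw [hψ]; nlinarith
        simp only [if_pos h1, if_neg (asymm h), if_pos h, EReal.coe_mul_bot_of_neg hα]
    · simp only [zero_smul, map_zero, lt_irrefl, if_neg (lt_irrefl (0:ℝ)), if_false,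
        hG.zero_apply, zero_mul]
      split <;> simp [EReal.zero_mul]
    · rcases lt_trichotomy (ψ x) 0 with h | h | h
      · have h1 : ψ (α • x) < 0 := by rw [hψ]; nlinarith
        simp only [if_pos h1, if_pos h, EReal.coe_mul_top_of_pos hα]
      · have h1 : ¬ ψ (α • x) < 0 := by rw [hψ, h]; simp
        have h2 : ¬ 0 < ψ (α • x) := by rw [hψ, h]; simp
        simp only [if_neg h1, if_neg h2, if_neg (show ¬ ψ x < 0 by rw [h]; simp),
          if_neg (show ¬ (0:ℝ) < ψ x by rw [h]; simp)]
        exact hG.1 α x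
      · have h1 : ¬ ψ (α • x) < 0 := by rw [hψ]; nlinarith
        have h2 : 0 < ψ (α • x) := by rw [hψ]; nlinarith
        simp only [if_neg h1, if_pos h2, if_neg (asymm h), if_pos h,
          EReal.coe_mul_bot_of_pos hα]
  · intro x x' hleg
    simp only at hleg ⊢
    have hsum : ψ (x + x') = ψ x + ψ x' := map_add ψ x x'
    rcases lt_trichotomy (ψ x) 0 with h | h | h <;>
      rcases lt_trichotomy (ψ x') 0 with h' | h' | h'
    · have hs : ψ (x + x') < 0 := by rw [hsum]; linarith
      rw [if_pos hs, if_pos h, if_pos h']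
      exact EReal.top_add_top.symm
    · have hs : ψ (x + x') < 0 := by rw [hsum, h']; linarith
      have hG' : G x' ≠ ⊥ := by
        intro hb
        exact hleg (Or.inl ⟨by rw [if_pos h], by
          rw [if_neg (show ¬ ψ x' < 0 by rw [h']; simp),
            if_neg (show ¬ (0:ℝ) < ψ x' by rw [h']; simp)]; exact hb⟩)
      rw [if_pos hs, if_pos h, if_neg (show ¬ ψ x' < 0 by rw [h']; simp),
        if_neg (show ¬ (0:ℝ) < ψ x' by rw [h']; simp)]
      exact (EReal.top_add_of_ne_bot hG').symm
    · exact absurd (Or.inl ⟨by rw [if_pos h], by rw [if_neg (asymm h'), if_pos h']⟩) hleg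
    · have hs : ψ (x + x') < 0 := by rw [hsum, h]; linarith
      have hG' : G x ≠ ⊥ := by
        intro hb
        exact hleg (Or.inr ⟨by
          rw [if_neg (show ¬ ψ x < 0 by rw [h]; simp),
            if_neg (show ¬ (0:ℝ) < ψ x by rw [h]; simp)]; exact hb,
          by rw [if_pos h']⟩)
      rw [if_pos hs, if_pos h', if_neg (show ¬ ψ x < 0 by rw [h]; simp),
        if_neg (show ¬ (0:ℝ) < ψ x by rw [h]; simp)]
      exact (EReal.add_top_of_ne_bot hG').symm
    · have hs1 : ¬ ψ (x + x') < 0 := by rw [hsum, h, h']; simp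
      have hs2 : ¬ (0:ℝ) < ψ (x + x') := by rw [hsum, h, h']; simp
      have hx1 : ¬ ψ x < 0 := by rw [h]; simp
      have hx2 : ¬ (0:ℝ) < ψ x := by rw [h]; simp
      have hy1 : ¬ ψ x' < 0 := by rw [h']; simp
      have hy2 : ¬ (0:ℝ) < ψ x' := by rw [h']; simp
      rw [if_neg hs1, if_neg hs2, if_neg hx1, if_neg hx2, if_neg hy1, if_neg hy2]
      refine hG.2 x x' ?_
      rw [if_neg hx1, if_neg hx2, if_neg hy1, if_neg hy2] at hleg
      exact hleg
    · have hs : 0 < ψ (x + x') := by rw [hsum, h]; linarith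
      have hx1 : ¬ ψ x < 0 := by rw [h]; simp
      have hx2 : ¬ (0:ℝ) < ψ x := by rw [h]; simp
      rw [if_neg (asymm hs), if_pos hs, if_neg hx1, if_neg hx2, if_neg (asymm h'), if_pos h']
      exact (EReal.add_bot (G x)).symm
    · exact absurd (Or.inr ⟨by rw [if_neg (asymm h), if_pos h], by rw [if_pos h']⟩) hleg
    · have hs : 0 < ψ (x + x') := by rw [hsum, h']; linarith
      have hy1 : ¬ ψ x' < 0 := by rw [h']; simp
      have hy2 : ¬ (0:ℝ) < ψ x' := by rw [h']; simp
      rw [if_neg (asymm hs), if_pos hs, if_neg (asymm h), if_pos h, if_neg hy1, if_neg hy2]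
      exact (EReal.bot_add (G x')).symm
    · have hs : 0 < ψ (x + x') := by rw [hsum]; linarith
      rw [if_neg (asymm hs), if_pos hs, if_neg (asymm h), if_pos h, if_neg (asymm h'), if_pos h']
      rfl

end Aux


lemma exists_dual_vanishing {V : Type*} [AddCommGroup V] [Module ℝ V] [FiniteDimensional ℝ V]
    {W : Submodule ℝ V} (hW : W ≠ ⊤) : ∃ φ : V →ₗ[ℝ] ℝ, φ ≠ 0 ∧ ∀ w ∈ W, φ w = 0 := by
  haveI := (Submodule.Quotient.nontrivial_iff (p := W)).2 hW
  have hpos : 0 < finrank ℝ (V ⧸ W) := finrank_pos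
  let b : Basis (Fin (finrank ℝ (V ⧸ W))) ℝ (V ⧸ W) := Module.finBasis ℝ (V ⧸ W)
  let i0 : Fin (finrank ℝ (V ⧸ W)) := ⟨0, hpos⟩
  refine ⟨(b.coord i0).comp W.mkQ, ?_, ?_⟩
  · intro hzero
    obtain ⟨v, hv⟩ := W.mkQ_surjective (b i0)
    have h1 : b.coord i0 (b i0) = 1 := by simp [Basis.coord_apply]
    have h2 := LinearMap.congr_fun hzero v
    rw [LinearMap.comp_apply, hv] at h2
    rw [h1] at h2
    simpa using h2
  · intro w hw
    have : W.mkQ w = 0 := (Submodule.Quotient.mk_eq_zero W).2 hw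
    rw [LinearMap.comp_apply, this, map_zero]

lemma sep_lemma {V : Type*} [NormedAddCommGroup V] [NormedSpace ℝ V] [FiniteDimensional ℝ V]
    {C : Set V} (hC : Convex ℝ C) (hne : C.Nonempty) (h0 : (0:V) ∉ C) :
    ∃ φ : V →ₗ[ℝ] ℝ, φ ≠ 0 ∧ ∀ p ∈ C, 0 ≤ φ p := by
  by_cases hcl : (0:V) ∈ closure C
  · by_cases hi : (interior C).Nonempty
    · obtain ⟨f, hf⟩ := geometric_hahn_banach_open_point hC.interior isOpen_interior
        (fun h => h0 (interior_subset h))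
      have hf0 : f (0:V) = 0 := map_zero f
      obtain ⟨b, hb⟩ := hi
      have hfb : f b < 0 := by have := hf b hb; rwa [hf0] at this
      refine ⟨-f.toLinearMap, ?_, ?_⟩
      · intro hz
        have h1 := LinearMap.congr_fun hz b
        simp only [LinearMap.neg_apply, LinearMap.zero_apply, neg_eq_zero,
          ContinuousLinearMap.coe_coe] at h1
        rw [h1] at hfb; exact lt_irrefl 0 hfb
      · intro a ha
        simp only [LinearMap.neg_apply, ContinuousLinearMap.coe_coe]
        rw [le_neg, neg_zero]
        by_contra hpos
        push_neg at hpos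
        have hd : 0 < f a - f b := by linarith
        set μ := f a / (f a - f b) with hμ
        have hμ0 : 0 < μ := div_pos hpos hd
        have hμ1 : μ < 1 := (div_lt_one hd).2 (by linarith)
        have hp : μ • b + (1 - μ) • a ∈ interior C := by
          apply hC.combo_interior_closure_subset_interior (a := μ) (b := 1 - μ) hμ0 (by linarith)
            (by ring)
          exact Set.add_mem_add (Set.smul_mem_smul_set hb)
            (Set.smul_mem_smul_set (subset_closure ha))
        have h2 := hf _ hp
        rw [hf0, map_add, map_smul, map_smul, smul_eq_mul, smul_eq_mul] at h2
        have h3 : μ * f b + (1 - μ) * f a = 0 := by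
          rw [hμ]; field_simp; ring
        linarith
    · have hspan : affineSpan ℝ C ≠ ⊤ := fun h =>
        hi ((hC.interior_nonempty_iff_affineSpan_eq_top).2 h)
      have hclosed : IsClosed (affineSpan ℝ C : Set V) :=
        (affineSpan ℝ C).closed_of_finiteDimensional
      have h0span : (0:V) ∈ affineSpan ℝ C :=
        closure_minimal (subset_affineSpan ℝ C) hclosed hcl
      set W := (affineSpan ℝ C).direction with hWdef
      have hCW : ∀ a ∈ C, a ∈ W := by
        intro a ha
        have := (AffineSubspace.vsub_right_mem_direction_iff_mem h0span a).2
          (subset_affineSpan ℝ C ha)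
        simpa using this
      have hWtop : W ≠ ⊤ := by
        intro h
        apply hspan
        rw [eq_top_iff]
        intro v _
        exact (AffineSubspace.vsub_right_mem_direction_iff_mem h0span v).1
          (by rw [← hWdef, h]; trivial)
      obtain ⟨φ, hφ0, hφW⟩ := exists_dual_vanishing hWtop
      exact ⟨φ, hφ0, fun p hp => (hφW p (hCW p hp)).ge⟩
  · obtain ⟨f, u, hu0, hu⟩ := geometric_hahn_banach_point_closed hC.closure
      isClosed_closure hcl
    have hf0 : f (0:V) = 0 := map_zero f
    rw [hf0] at hu0
    refine ⟨f.toLinearMap, ?_, fun p hp => ?_⟩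
    · intro hz
      obtain ⟨a, ha⟩ := hne
      have h1 := hu a (subset_closure ha)
      have h2 := LinearMap.congr_fun hz a
      simp only [LinearMap.zero_apply, ContinuousLinearMap.coe_coe] at h2
      rw [h2] at h1; linarith
    · have h1 := hu p (subset_closure hp)
      simp only [ContinuousLinearMap.coe_coe]
      linarith

lemma helper_lemma (n : ℕ) (C : Set ((Fin n → ℝ) × ℝ)) (hC : Convex ℝ C)
    (hup : ∀ p ∈ C, ∀ s : ℝ, 0 ≤ s → (p.1, p.2 + s) ∈ C)
    (h0 : (0 : (Fin n → ℝ) × ℝ) ∉ C)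
    (hker : ∀ ψ : (Fin n → ℝ) →ₗ[ℝ] ℝ, ψ ≠ 0 → (∀ p ∈ C, 0 ≤ ψ p.1) →
      ∃ f : (Fin n → ℝ) → EReal, IsLinExt f ∧ ∀ p ∈ C, f p.1 ≤ (p.2 : EReal)) :
    ∃ f : (Fin n → ℝ) → EReal, IsLinExt f ∧ ∀ p ∈ C, f p.1 ≤ (p.2 : EReal) := by
  rcases C.eq_empty_or_nonempty with rfl | hne
  · refine ⟨fun _ => ((0:ℝ) : EReal), ?_, by simp⟩
    have h : (fun _ : Fin n → ℝ => ((0:ℝ) : EReal)) =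
        fun x => (((0 : (Fin n → ℝ) →ₗ[ℝ] ℝ) x : ℝ) : EReal) := by
      funext x; simp
    rw [h]; exact isLinExt_coe 0
  · obtain ⟨φ, hφ0, hφpos⟩ := sep_lemma hC hne h0
    set ψ : (Fin n → ℝ) →ₗ[ℝ] ℝ := φ.comp (LinearMap.inl ℝ (Fin n → ℝ) ℝ) with hψdef
    set c : ℝ := φ ((0 : Fin n → ℝ), (1:ℝ)) with hcdef
    have hdec : ∀ p : (Fin n → ℝ) × ℝ, φ p = ψ p.1 + p.2 * c := by
      rintro ⟨x, t⟩
      have h1 : ((x, t) : (Fin n → ℝ) × ℝ)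
          = ((x, 0) : (Fin n → ℝ) × ℝ) + t • ((0 : Fin n → ℝ), (1:ℝ)) := by
        simp [Prod.ext_iff]
      show φ (x, t) = ψ x + t * c
      conv_lhs => rw [h1, map_add, map_smul]
      rw [smul_eq_mul]
      rfl
    have hc0 : 0 ≤ c := by
      by_contra hc
      push_neg at hc
      obtain ⟨p, hp⟩ := hne
      have hcne : c ≠ 0 := ne_of_lt hc
      set A := ψ p.1 + p.2 * c with hA
      set s := (|A| + 1) / (-c) with hs
      have hsc : s * c = -(|A| + 1) := by
        rw [hs, div_mul_eq_mul_div, mul_div_assoc, div_neg, div_self hcne]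
        ring
      have hs0 : 0 ≤ s := div_nonneg (by positivity) (by linarith)
      have h2 := hφpos _ (hup p hp s hs0)
      rw [hdec] at h2
      have h3 : ψ (p.1, p.2 + s).1 + (p.1, p.2 + s).2 * c = A + s * c := by
        simp only [hA]; ring
      rw [h3, hsc] at h2
      have := le_abs_self A
      linarith
    rcases hc0.eq_or_lt with hceq | hclt
    · have hψ0 : ψ ≠ 0 := by
        intro h
        apply hφ0
        apply LinearMap.ext
        intro p
        rw [hdec p, h, ← hceq]
        simp
      refine hker ψ hψ0 (fun p hp => ?_)
      have h1 := hφpos p hp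
      rw [hdec p, ← hceq] at h1
      simpa using h1
    · set ψ' : (Fin n → ℝ) →ₗ[ℝ] ℝ := (-(c⁻¹)) • ψ with hψ'
      refine ⟨fun x => ((ψ' x : ℝ) : EReal), isLinExt_coe ψ', ?_⟩
      intro p hp
      have h1 := hφpos p hp
      rw [hdec p] at h1
      rw [EReal.coe_le_coe_iff]
      simp only [hψ', LinearMap.smul_apply, smul_eq_mul]
      rw [show -c⁻¹ * ψ p.1 = (-ψ p.1) / c by ring]
      rw [div_le_iff₀ hclt]
      linarith

lemma main_lemma (n : ℕ) (C : Set ((Fin n → ℝ) × ℝ)) (hC : Convex ℝ C)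
    (hup : ∀ p ∈ C, ∀ s : ℝ, 0 ≤ s → (p.1, p.2 + s) ∈ C)
    (h0 : (0 : (Fin n → ℝ) × ℝ) ∉ C) :
    ∃ f : (Fin n → ℝ) → EReal, IsLinExt f ∧ ∀ p ∈ C, f p.1 ≤ (p.2 : EReal) := by
  induction n with
  | zero =>
    refine helper_lemma 0 C hC hup h0 (fun ψ hψ _ => absurd ?_ hψ)
    apply LinearMap.ext
    intro x
    rw [Subsingleton.elim x 0, map_zero, LinearMap.zero_apply]
  | succ m ih =>
    refine helper_lemma (m+1) C hC hup h0 (fun ψ hψ hpos => ?_)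
    -- rank of kernel
    have hrank : finrank ℝ (LinearMap.ker ψ) = m := by
      have h1 := LinearMap.finrank_range_add_finrank_ker ψ
      have h2 : finrank ℝ (Fin (m+1) → ℝ) = m + 1 := Module.finrank_fin_fun ℝ
      have h3 : LinearMap.range ψ = ⊤ := by
        rw [LinearMap.range_eq_top]
        intro cc
        obtain ⟨x, hx⟩ : ∃ x, ψ x ≠ 0 := by
          by_contra h
          push_neg at h
          exact hψ (LinearMap.ext h)
        exact ⟨(cc / ψ x) • x, by rw [map_smul, smul_eq_mul]; field_simp⟩
      rw [h3, finrank_top, h2] at h1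
      simp only [Module.finrank_self] at h1
      omega
    let b : Basis (Fin m) ℝ (LinearMap.ker ψ) := Module.finBasisOfFinrankEq ℝ _ hrank
    obtain ⟨Q, hQ⟩ := Submodule.exists_isCompl (LinearMap.ker ψ)
    let proj : (Fin (m+1) → ℝ) →ₗ[ℝ] (LinearMap.ker ψ) :=
      Submodule.linearProjOfIsCompl _ _ hQ
    let L : (Fin (m+1) → ℝ) →ₗ[ℝ] (Fin m → ℝ) := (b.equivFun : _ →ₗ[ℝ] _) ∘ₗ proj
    let emb : (Fin m → ℝ) →ₗ[ℝ] (Fin (m+1) → ℝ) :=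
      (LinearMap.ker ψ).subtype ∘ₗ (b.equivFun.symm : _ →ₗ[ℝ] _)
    let M : (Fin m → ℝ) × ℝ →ₗ[ℝ] (Fin (m+1) → ℝ) × ℝ := emb.prodMap LinearMap.id
    have hM : ∀ q : (Fin m → ℝ) × ℝ, M q = (emb q.1, q.2) := fun q => rfl
    set C' : Set ((Fin m → ℝ) × ℝ) := M ⁻¹' C with hC'def
    have hC'conv : Convex ℝ C' := hC.linear_preimage M
    have hC'up : ∀ q ∈ C', ∀ s : ℝ, 0 ≤ s → (q.1, q.2 + s) ∈ C' := by
      intro q hq s hs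
      have : M (q.1, q.2 + s) = ((M q).1, (M q).2 + s) := rfl
      show M (q.1, q.2 + s) ∈ C
      rw [this]
      exact hup (M q) hq s hs
    have hC'0 : (0 : (Fin m → ℝ) × ℝ) ∉ C' := by
      intro h
      apply h0
      have : M 0 = 0 := map_zero M
      rwa [hC'def, Set.mem_preimage, this] at h
    obtain ⟨f'', hf''lin, hf''⟩ := ih C' hC'conv hC'up hC'0
    refine ⟨fun x => if ψ x < 0 then ⊤ else if 0 < ψ x then ⊥ else f'' (L x),
      isLinExt_patch ψ (hf''lin.comp L), ?_⟩
    intro p hp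
    show (if ψ p.1 < 0 then (⊤:EReal) else if 0 < ψ p.1 then ⊥ else f'' (L p.1)) ≤ (p.2 : EReal)
    have hx : 0 ≤ ψ p.1 := hpos p hp
    rcases hx.eq_or_lt with heq | hlt
    · -- ψ p.1 = 0
      have hk : p.1 ∈ LinearMap.ker ψ := by
        rw [LinearMap.mem_ker, ← heq]
      have hL : emb (L p.1) = p.1 := by
        show (LinearMap.ker ψ).subtype (b.equivFun.symm (b.equivFun (proj p.1))) = p.1
        rw [LinearEquiv.symm_apply_apply]
        show ((proj p.1 : LinearMap.ker ψ) : Fin (m+1) → ℝ) = p.1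
        have : proj p.1 = ⟨p.1, hk⟩ := by
          have := Submodule.linearProjOfIsCompl_apply_left hQ (⟨p.1, hk⟩ : LinearMap.ker ψ)
          exact this
        rw [this]
      have hmem : ((L p.1, p.2) : (Fin m → ℝ) × ℝ) ∈ C' := by
        show M (L p.1, p.2) ∈ C
        rw [hM, hL]
        exact hp
      have := hf'' (L p.1, p.2) hmem
      simp only at this
      rw [if_neg (show ¬ ψ p.1 < 0 by rw [← heq]; simp),
        if_neg (show ¬ (0:ℝ) < ψ p.1 by rw [← heq]; simp)]
      exact this
    · rw [if_neg (asymm hlt), if_pos hlt]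
      exact bot_le

theorem stmt_13 (d : ℕ) (g : (Fin d → ℝ) → EReal) (hbot : ∀ x, g x ≠ ⊥) :
    Convex ℝ {p : (Fin d → ℝ) × ℝ | g p.1 ≤ (p.2 : EReal)} ↔
      ∃ (ι : Type) (H : ι → (Fin d → ℝ) → EReal),
        (∀ i, IsAffExt (H i)) ∧ ∀ x, g x = ⨆ i, H i x := by
  constructor
  · intro hconv
    set C := {p : (Fin d → ℝ) × ℝ | g p.1 ≤ (p.2 : EReal)} with hCdef
    have key : ∀ q : {q : (Fin d → ℝ) × ℝ // ¬ g q.1 ≤ (q.2 : EReal)},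
        ∃ f : (Fin d → ℝ) → EReal, IsLinExt f ∧
          ∀ p : (Fin d → ℝ) × ℝ, g p.1 ≤ (p.2 : EReal) →
            f (p.1 - q.val.1) ≤ ((p.2 - q.val.2 : ℝ) : EReal) := by
      intro q
      set Cq : Set ((Fin d → ℝ) × ℝ) := {p | p + q.val ∈ C} with hCq
      have hconvq : Convex ℝ Cq := by
        intro p1 h1 p2 h2 a bb ha hb hab
        show (a • p1 + bb • p2) + q.val ∈ C
        have hq : a • q.val + bb • q.val = q.val := by rw [← add_smul, hab, one_smul]
        have heq : a • (p1 + q.val) + bb • (p2 + q.val) = (a • p1 + bb • p2) + q.val := by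
          rw [smul_add, smul_add]
          conv_rhs => rw [← hq]
          abel
        have hmem := hconv h1 h2 ha hb hab
        rwa [heq] at hmem
      have hupq : ∀ p ∈ Cq, ∀ s : ℝ, 0 ≤ s → (p.1, p.2 + s) ∈ Cq := by
        intro p hp s hs
        have hp' : p + q.val ∈ C := hp
        show g (p.1 + q.val.1) ≤ ((p.2 + s + q.val.2 : ℝ) : EReal)
        refine le_trans hp' ?_
        refine EReal.coe_le_coe_iff.2 ?_
        show p.2 + q.val.2 ≤ p.2 + s + q.val.2
        linarith
      have h0q : (0 : (Fin d → ℝ) × ℝ) ∉ Cq := by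
        intro h
        have h' : (0 : (Fin d → ℝ) × ℝ) + q.val ∈ C := h
        rw [zero_add] at h'
        exact q.property h'
      obtain ⟨f, hlin, hbound⟩ := main_lemma d Cq hconvq hupq h0q
      refine ⟨f, hlin, ?_⟩
      intro p hp
      have hmem : ((p.1 - q.val.1, p.2 - q.val.2) : (Fin d → ℝ) × ℝ) ∈ Cq := by
        show ((p.1 - q.val.1, p.2 - q.val.2) : (Fin d → ℝ) × ℝ) + q.val ∈ C
        have heq : ((p.1 - q.val.1, p.2 - q.val.2) : (Fin d → ℝ) × ℝ) + q.val
            = (p.1, p.2) := by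
          ext <;> simp
        rw [heq]
        exact hp
      exact hbound _ hmem
    choose f hlin hbound using key
    refine ⟨{q : (Fin d → ℝ) × ℝ // ¬ g q.1 ≤ (q.2 : EReal)},
      fun q x => f q (x - q.val.1) + (q.val.2 : EReal),
      fun q => ⟨f q, q.val.1, q.val.2, hlin q, fun _ => rfl⟩, ?_⟩
    intro x
    apply le_antisymm
    · apply le_of_forall_lt_imp_le_of_dense
      intro w hw
      obtain ⟨r, hr1, hr2⟩ := EReal.lt_iff_exists_real_btwn.1 hw
      have hqp : ¬ g x ≤ ((r : ℝ) : EReal) := not_le.2 hr2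
      have hval : f ⟨(x, r), hqp⟩ (x - x) + ((r : ℝ) : EReal) = (r : EReal) := by
        rw [sub_self, (hlin ⟨(x, r), hqp⟩).zero_apply, zero_add]
      calc w ≤ (r : EReal) := hr1.le
        _ = _ := hval.symm
        _ ≤ _ := le_iSup (fun q => f q (x - q.val.1) + ((q.val.2 : ℝ) : EReal)) ⟨(x, r), hqp⟩
    · apply iSup_le
      intro q
      apply le_of_forall_gt_imp_ge_of_dense
      intro w hw
      obtain ⟨t, ht1, ht2⟩ := EReal.lt_iff_exists_real_btwn.1 hw
      have hb := hbound q (x, t) ht1.le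
      calc f q (x - q.val.1) + ((q.val.2 : ℝ) : EReal)
          ≤ ((t - q.val.2 : ℝ) : EReal) + ((q.val.2 : ℝ) : EReal) := add_le_add_left hb _
        _ = (t : EReal) := by rw [← EReal.coe_add]; norm_num
        _ ≤ w := ht2.le
  · rintro ⟨ι, H, haff, hsup⟩
    intro p hp q hq a bb ha hb hab
    rcases ha.eq_or_lt with h0a | h0a
    · have hbb : bb = 1 := by linarith
      have heq : a • p + bb • q = q := by rw [← h0a, hbb, zero_smul, one_smul, zero_add]
      rw [heq]; exact hq
    rcases hb.eq_or_lt with h0b | h0b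
    · have haa : a = 1 := by linarith
      have heq : a • p + bb • q = p := by rw [← h0b, haa, zero_smul, one_smul, add_zero]
      rw [heq]; exact hp
    show g (a • p + bb • q).1 ≤ (((a • p + bb • q).2 : ℝ) : EReal)
    rw [hsup]
    apply iSup_le
    intro i
    obtain ⟨fi, x₀, β, hlini, hrep⟩ := haff i
    have hhp : H i p.1 ≤ (p.2 : EReal) := by
      refine le_trans ?_ hp
      rw [hsup p.1]
      exact le_iSup (fun i => H i p.1) i
    have hhq : H i q.1 ≤ (q.2 : EReal) := by
      refine le_trans ?_ hq
      rw [hsup q.1]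
      exact le_iSup (fun i => H i q.1) i
    rw [hrep] at hhp hhq
    set u := p.1 - x₀ with hu_def
    set v := q.1 - x₀ with hv_def
    have hu : fi u ≤ ((p.2 - β : ℝ) : EReal) := by
      rw [EReal.coe_sub]
      exact (EReal.le_sub_iff_add_le (Or.inl (EReal.coe_ne_bot β))
        (Or.inl (EReal.coe_ne_top β))).2 hhp
    have hv : fi v ≤ ((q.2 - β : ℝ) : EReal) := by
      rw [EReal.coe_sub]
      exact (EReal.le_sub_iff_add_le (Or.inl (EReal.coe_ne_bot β))
        (Or.inl (EReal.coe_ne_top β))).2 hhq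
    have hb1 : (a : EReal) * fi u ≤ ((a * (p.2 - β) : ℝ) : EReal) := by
      rw [EReal.coe_mul]
      exact mul_le_mul_of_nonneg_left hu (by exact_mod_cast h0a.le)
    have hb2 : (bb : EReal) * fi v ≤ ((bb * (q.2 - β) : ℝ) : EReal) := by
      rw [EReal.coe_mul]
      exact mul_le_mul_of_nonneg_left hv (by exact_mod_cast h0b.le)
    have hu_top : (a : EReal) * fi u ≠ ⊤ := ne_top_of_le_ne_top (EReal.coe_ne_top _) hb1
    have hv_top : (bb : EReal) * fi v ≠ ⊤ := ne_top_of_le_ne_top (EReal.coe_ne_top _) hb2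
    have lu : fi (a • u) = (a : EReal) * fi u := hlini.1 a u
    have lv : fi (bb • v) = (bb : EReal) * fi v := hlini.1 bb v
    have hcomb : (a • p + bb • q).1 - x₀ = a • u + bb • v := by
      show a • p.1 + bb • q.1 - x₀ = a • (p.1 - x₀) + bb • (q.1 - x₀)
      have hx0 : a • x₀ + bb • x₀ = x₀ := by rw [← add_smul, hab, one_smul]
      rw [smul_sub, smul_sub]
      conv_lhs => rw [← hx0]
      abel
    rw [hrep, hcomb]
    have hsum : fi (a • u + bb • v) = (a : EReal) * fi u + (bb : EReal) * fi v := by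
      rw [hlini.2 _ _ (by
        rw [lu, lv]
        rintro (⟨h1, _⟩ | ⟨_, h2⟩)
        exacts [hu_top h1, hv_top h2]), lu, lv]
    rw [hsum]
    have hfinal : (a : EReal) * fi u + (bb : EReal) * fi v + (β : EReal)
        ≤ ((a * (p.2 - β) + bb * (q.2 - β) + β : ℝ) : EReal) := by
      rw [EReal.coe_add, EReal.coe_add]
      exact add_le_add (add_le_add hb1 hb2) le_rfl
    refine le_trans hfinal ?_
    show ((a * (p.2 - β) + bb * (q.2 - β) + β : ℝ) : EReal) ≤ ((a * p.2 + bb * q.2 : ℝ) : EReal)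
    rw [EReal.coe_le_coe_iff]
    exact le_of_eq (by linear_combination (-β) * hab)
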